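/- Let T ≥ 1 and d ≥ 1, let U_1,…,U_T be unitary d×d complex matrices and U := U_T⋯U_1, let Π_in and Π_out be orthogonal projections on ℂ^d, and let 0 ≤ ε < 1 be such that |⟨η, Uξ⟩|² ≤ ε for all unit vectors ξ ∈ ker Π_in and η ∈ ker Π_out. Let ψ ∈ ℂ^{T+1} be a unit vector, and let H_prop be a positive semidefinite Hermitian matrix on ℂ^{T+1}⊗ℂ^d whose kernel is exactly { Σ_{t=0}^T ψ_t |t⟩⊗(U_t⋯U_1)ξ : ξ ∈ ℂ^d } and whose smallest nonzero eigenvalue Δ satisfies Δ ≤ 1. Then the smallest eigenvalue of H_prop + |0⟩⟨0|⊗Π_in + |T⟩⟨T|⊗Π_out is at least (Δ/4)·(1 − √ε)·min{|ψ_0|², |ψ_T|²}. -/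

import Mathlib

set_option linter.unusedSectionVars false
set_option maxHeartbeats 1600000

open Matrix Kronecker ComplexOrder

/-- The ordered product `U_t ⋯ U_1` (the empty product for `t = 0` is the identity). -/
noncomputable def prodU (d : ℕ) (U : ℕ → Matrix (Fin d) (Fin d) ℂ) (t : ℕ) :
    Matrix (Fin d) (Fin d) ℂ :=
  ((List.range t).reverse.map (fun i => U (i + 1))).prod

/-- The history state `Σ_t ψ_t |t⟩ ⊗ (U_t ⋯ U_1) ξ`. -/
noncomputable def historyState (T d : ℕ) (U : ℕ → Matrix (Fin d) (Fin d) ℂ)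
    (ψ : Fin (T + 1) → ℂ) (ξ : Fin d → ℂ) : Fin (T + 1) × Fin d → ℂ :=
  fun p => ψ p.1 * (prodU d U p.1.val).mulVec ξ p.2

namespace Stmt3Aux

variable {n : Type*} [Fintype n] [DecidableEq n]

noncomputable def nrm (f : n → ℂ) : ℝ := ‖(WithLp.equiv 2 (n → ℂ)).symm f‖

lemma nrm_nonneg (f : n → ℂ) : 0 ≤ nrm f := norm_nonneg _

lemma dot_self_re (f : n → ℂ) : (star f ⬝ᵥ f).re = nrm f ^ 2 := by
  rw [dotProduct_comm, ← EuclideanSpace.inner_toLp_toLp]; exact inner_self_eq_norm_sq (𝕜 := ℂ) _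

lemma dot_abs_le (f g : n → ℂ) : ‖star f ⬝ᵥ g‖ ≤ nrm f * nrm g := by
  rw [dotProduct_comm, ← EuclideanSpace.inner_toLp_toLp]; exact norm_inner_le_norm (𝕜 := ℂ) _ _

lemma nrm_add_le (f g : n → ℂ) : nrm (f + g) ≤ nrm f + nrm g := norm_add_le _ _

lemma nrm_neg (f : n → ℂ) : nrm (-f) = nrm f := norm_neg _

lemma star_mulVec_dot (M : Matrix n n ℂ) (x y : n → ℂ) :
    star (M.mulVec x) ⬝ᵥ y = star x ⬝ᵥ Mᴴ.mulVec y := by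
  rw [star_mulVec, ← dotProduct_mulVec]

lemma unitary_dot {M : Matrix n n ℂ} (hM : M ∈ Matrix.unitaryGroup n ℂ) (x y : n → ℂ) :
    star (M.mulVec x) ⬝ᵥ M.mulVec y = star x ⬝ᵥ y := by
  rw [star_mulVec_dot, mulVec_mulVec, ← Matrix.star_eq_conjTranspose,
    (Matrix.mem_unitaryGroup_iff'.mp hM), one_mulVec]

lemma unitary_nrm {M : Matrix n n ℂ} (hM : M ∈ Matrix.unitaryGroup n ℂ) (x : n → ℂ) :
    nrm (M.mulVec x) = nrm x := by
  have h := congrArg Complex.re (unitary_dot hM x x)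
  rw [dot_self_re, dot_self_re] at h
  calc nrm (M.mulVec x) = Real.sqrt (nrm (M.mulVec x) ^ 2) := (Real.sqrt_sq (nrm_nonneg _)).symm
    _ = Real.sqrt (nrm x ^ 2) := by rw [h]
    _ = nrm x := Real.sqrt_sq (nrm_nonneg _)

lemma star_mul_self_re (z : ℂ) : (star z * z).re = Complex.normSq z := by
  simp [Complex.star_def, Complex.mul_re, Complex.normSq_apply]
  try ring

lemma nrm_sq_eq_sum (f : n → ℂ) : nrm f ^ 2 = ∑ i, Complex.normSq (f i) := by
  rw [← dot_self_re]
  simp only [dotProduct, Pi.star_apply, Complex.re_sum]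
  exact Finset.sum_congr rfl (fun i _ => star_mul_self_re _)

lemma proj_quad {P : Matrix n n ℂ} (hP : P.IsHermitian) (hP2 : P * P = P) (v : n → ℂ) :
    star v ⬝ᵥ P.mulVec v = star (P.mulVec v) ⬝ᵥ (P.mulVec v) := by
  rw [star_mulVec_dot, mulVec_mulVec, hP.eq, hP2]

lemma proj_quad_re {P : Matrix n n ℂ} (hP : P.IsHermitian) (hP2 : P * P = P) (v : n → ℂ) :
    (star v ⬝ᵥ P.mulVec v).re = nrm (P.mulVec v) ^ 2 := by
  rw [proj_quad hP hP2, dot_self_re]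

lemma proj_contract {P : Matrix n n ℂ} (hP : P.IsHermitian) (hP2 : P * P = P) (v : n → ℂ) :
    nrm (P.mulVec v) ≤ nrm v := by
  have h1 : nrm (P.mulVec v) ^ 2 ≤ nrm v * nrm (P.mulVec v) := by
    rw [← proj_quad_re hP hP2]
    calc (star v ⬝ᵥ P.mulVec v).re ≤ ‖star v ⬝ᵥ P.mulVec v‖ := Complex.re_le_norm _
      _ ≤ nrm v * nrm (P.mulVec v) := dot_abs_le _ _
  nlinarith [nrm_nonneg (P.mulVec v), nrm_nonneg v]

lemma two_proj {P Q : Matrix n n ℂ} (hP : P.IsHermitian) (hP2 : P * P = P)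
    (hQ : Q.IsHermitian) (hQ2 : Q * Q = Q) (c : ℝ) (hc : 0 ≤ c)
    (hover : ∀ x y : n → ℂ, P.mulVec x = 0 → Q.mulVec y = 0 →
      ‖star x ⬝ᵥ y‖ ≤ c * (nrm x * nrm y)) (ξ : n → ℂ) :
    (1 - c) * nrm ξ ^ 2 ≤ (star ξ ⬝ᵥ P.mulVec ξ).re + (star ξ ⬝ᵥ Q.mulVec ξ).re := by
  set x := ξ - P.mulVec ξ with hxdef
  set y := ξ - Q.mulVec ξ with hydef
  have hPx : P.mulVec x = 0 := by
    rw [hxdef, mulVec_sub, mulVec_mulVec, hP2, sub_self]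
  have hQy : Q.mulVec y = 0 := by
    rw [hydef, mulVec_sub, mulVec_mulVec, hQ2, sub_self]
  have hxP : ∀ z : n → ℂ, star x ⬝ᵥ P.mulVec z = 0 := by
    intro z
    rw [← hP.eq, ← star_mulVec_dot, hPx]
    simp
  have hyQ : ∀ z : n → ℂ, star y ⬝ᵥ Q.mulVec z = 0 := by
    intro z
    rw [← hQ.eq, ← star_mulVec_dot, hQy]
    simp
  have hxx : star x ⬝ᵥ x = star x ⬝ᵥ ξ := by
    rw [hxdef]; rw [dotProduct_sub]; rw [hxP ξ, sub_zero]
  have hyy : star y ⬝ᵥ y = star y ⬝ᵥ ξ := by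
    rw [hydef]; rw [dotProduct_sub]; rw [hyQ ξ, sub_zero]
  have hPξ : (star ξ ⬝ᵥ P.mulVec ξ).re = nrm ξ ^ 2 - nrm x ^ 2 := by
    have h0 : star ξ ⬝ᵥ ξ = star x ⬝ᵥ x + star ξ ⬝ᵥ P.mulVec ξ := by
      have hsplit : star ξ ⬝ᵥ ξ = star x ⬝ᵥ ξ + star (P.mulVec ξ) ⬝ᵥ ξ := by
        have : (star x + star (P.mulVec ξ)) = star ξ := by
          rw [hxdef]; push_cast [star_sub]; ring
        rw [← this, add_dotProduct]
      rw [hsplit, hxx]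
      congr 1
      rw [star_mulVec_dot, hP.eq]
    have := congrArg Complex.re h0
    rw [Complex.add_re, dot_self_re, dot_self_re] at this
    linarith [this]
  have hQξ : (star ξ ⬝ᵥ Q.mulVec ξ).re = nrm ξ ^ 2 - nrm y ^ 2 := by
    have h0 : star ξ ⬝ᵥ ξ = star y ⬝ᵥ y + star ξ ⬝ᵥ Q.mulVec ξ := by
      have hsplit : star ξ ⬝ᵥ ξ = star y ⬝ᵥ ξ + star (Q.mulVec ξ) ⬝ᵥ ξ := by
        have : (star y + star (Q.mulVec ξ)) = star ξ := by
          rw [hydef]; push_cast [star_sub]; ring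
        rw [← this, add_dotProduct]
      rw [hsplit, hyy]
      congr 1
      rw [star_mulVec_dot, hQ.eq]
    have := congrArg Complex.re h0
    rw [Complex.add_re, dot_self_re, dot_self_re] at this
    linarith [this]
  set S := nrm x ^ 2 + nrm y ^ 2 with hSdef
  have hS0 : 0 ≤ S := by positivity
  have hSre : S = (star (x + y) ⬝ᵥ ξ).re := by
    rw [star_add, add_dotProduct, Complex.add_re, ← hxx, ← hyy,
      dot_self_re, dot_self_re]
  have hxy : (star x ⬝ᵥ y).re ≤ c * (nrm x * nrm y) :=
    le_trans (Complex.re_le_norm _) (hover x y hPx hQy)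
  have hnxy : nrm (x + y) ^ 2 ≤ (1 + c) * S := by
    have hexp : (star (x + y) ⬝ᵥ (x + y)).re
        = (star x ⬝ᵥ x).re + (star y ⬝ᵥ y).re + 2 * (star x ⬝ᵥ y).re := by
      have hyx : (star y ⬝ᵥ x).re = (star x ⬝ᵥ y).re := by
        rw [Matrix.star_dotProduct]
        simp [RCLike.star_def]
      rw [star_add, add_dotProduct, dotProduct_add, dotProduct_add]
      simp [Complex.add_re, hyx]
      ring
    rw [← dot_self_re, hexp, dot_self_re, dot_self_re]
    have h2 : 2 * (nrm x * nrm y) ≤ nrm x ^ 2 + nrm y ^ 2 := by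
      nlinarith [sq_nonneg (nrm x - nrm y)]
    nlinarith [nrm_nonneg x, nrm_nonneg y]
  have hSb : S ≤ (1 + c) * nrm ξ ^ 2 := by
    have h1 : S ≤ nrm (x + y) * nrm ξ :=
      hSre ▸ le_trans (Complex.re_le_norm _) (dot_abs_le _ _)
    rcases eq_or_lt_of_le hS0 with h0 | h0
    · nlinarith [sq_nonneg (nrm ξ)]
    · have h2 : S ^ 2 ≤ (1 + c) * S * nrm ξ ^ 2 := by
        nlinarith [nrm_nonneg (x + y), nrm_nonneg ξ, sq_nonneg (nrm ξ)]
      nlinarith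
  rw [hPξ, hQξ]
  linarith

lemma prodU_zero (d : ℕ) (U : ℕ → Matrix (Fin d) (Fin d) ℂ) : prodU d U 0 = 1 := rfl

lemma prodU_succ (d : ℕ) (U : ℕ → Matrix (Fin d) (Fin d) ℂ) (t : ℕ) :
    prodU d U (t + 1) = U (t + 1) * prodU d U t := by
  unfold prodU
  rw [List.range_succ, List.reverse_append, List.map_append, List.prod_append]
  simp

lemma prodU_unitary {d T : ℕ} (U : ℕ → Matrix (Fin d) (Fin d) ℂ)
    (hU : ∀ i, 1 ≤ i → i ≤ T → U i ∈ Matrix.unitaryGroup (Fin d) ℂ)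
    (t : ℕ) (ht : t ≤ T) : prodU d U t ∈ Matrix.unitaryGroup (Fin d) ℂ := by
  induction t with
  | zero => rw [prodU_zero]; exact Submonoid.one_mem _
  | succ k ih =>
    rw [prodU_succ]
    exact mul_mem (hU (k + 1) (Nat.succ_le_succ (Nat.zero_le k)) ht)
      (ih (Nat.le_of_succ_le ht))

lemma kron_quad {N d : ℕ} (t0 : Fin N) (M : Matrix (Fin d) (Fin d) ℂ)
    (v : Fin N × Fin d → ℂ) :
    star v ⬝ᵥ ((Matrix.single t0 t0 (1 : ℂ)) ⊗ₖ M).mulVec v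
      = star (fun k => v (t0, k)) ⬝ᵥ M.mulVec (fun k => v (t0, k)) := by
  simp only [Matrix.mulVec, dotProduct, Fintype.sum_prod_type, kroneckerMap_apply,
    Matrix.single, Matrix.of_apply, Pi.star_apply]
  have inner : ∀ (x : Fin N) (j : Fin d),
      (∑ s : Fin N, ∑ k : Fin d, (if t0 = x ∧ t0 = s then (1 : ℂ) else 0) * M j k * v (s, k))
        = if t0 = x then ∑ k : Fin d, M j k * v (t0, k) else 0 := by
    intro x j
    by_cases hx : t0 = x
    · simp [hx, ite_mul, zero_mul, one_mul, Finset.sum_ite_eq]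
    · simp [hx]
  simp only [inner, mul_ite, mul_zero]
  rw [Finset.sum_comm]
  simp [Finset.sum_ite_eq]

lemma kron_herm {N d : ℕ} (t0 : Fin N) {P : Matrix (Fin d) (Fin d) ℂ} (hP : P.IsHermitian) :
    ((Matrix.single t0 t0 (1 : ℂ)) ⊗ₖ P).IsHermitian := by
  ext p q
  simp only [conjTranspose_apply, kroneckerMap_apply, Matrix.single, Matrix.of_apply,
    star_mul']
  have hPpq : star (P q.2 p.2) = P p.2 q.2 := by
    conv_rhs => rw [← hP.eq]
    simp [conjTranspose_apply]
  rw [hPpq]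
  congr 1
  by_cases h1 : t0 = p.1 <;> by_cases h2 : t0 = q.1 <;> simp [h1, h2]

lemma kron_mul_same {N d : ℕ} (t0 : Fin N) (P Q : Matrix (Fin d) (Fin d) ℂ) :
    ((Matrix.single t0 t0 (1 : ℂ)) ⊗ₖ P) * ((Matrix.single t0 t0 (1 : ℂ)) ⊗ₖ Q)
      = (Matrix.single t0 t0 (1 : ℂ)) ⊗ₖ (P * Q) := by
  rw [← Matrix.mul_kronecker_mul, Matrix.single_mul_single_same, one_mul]

lemma kron_mul_ne {N d : ℕ} (t0 t1 : Fin N) (h : t0 ≠ t1) (P Q : Matrix (Fin d) (Fin d) ℂ) :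
    ((Matrix.single t0 t0 (1 : ℂ)) ⊗ₖ P) * ((Matrix.single t1 t1 (1 : ℂ)) ⊗ₖ Q)
      = 0 := by
  rw [← Matrix.mul_kronecker_mul]
  rw [Matrix.single_mul_single_of_ne (i := t0) (j := t0) (k := t1) (c := (1 : ℂ)) (h := h) (d := (1 : ℂ))]
  exact Matrix.zero_kronecker _

lemma scalar_ineq (Δ c a b q : ℝ) (hΔ0 : 0 ≤ Δ) (hΔ1 : Δ ≤ 1) (hc0 : 0 ≤ c) (hc1 : c ≤ 1)
    (ha : 0 ≤ a) (hb : 0 ≤ b) (hq : 0 ≤ q) (hq2 : c * a - b ≤ q) :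
    Δ / 4 * c ^ 2 * (a ^ 2 + b ^ 2) ≤ Δ * b ^ 2 + q ^ 2 := by
  rcases le_or_gt (c * a) b with hcase | hcase
  · have h2 : c ^ 2 * a ^ 2 ≤ b ^ 2 := by nlinarith [mul_nonneg hc0 ha]
    have h3 : c ^ 2 * b ^ 2 ≤ b ^ 2 := by
      nlinarith [mul_nonneg (by nlinarith : (0:ℝ) ≤ 1 - c ^ 2) (sq_nonneg b)]
    nlinarith [sq_nonneg q, mul_le_mul_of_nonneg_left h2 (by linarith : (0:ℝ) ≤ Δ / 4),
      mul_le_mul_of_nonneg_left h3 (by linarith : (0:ℝ) ≤ Δ / 4),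
      mul_nonneg hΔ0 (sq_nonneg b)]
  · have h1 : (c * a - b) ^ 2 ≤ q ^ 2 := by nlinarith
    have key : c ^ 2 * (a ^ 2 + b ^ 2) / 4 ≤ b ^ 2 + (c * a - b) ^ 2 := by
      have h8 : (0:ℝ) < 8 - c ^ 2 := by nlinarith
      have h82 : (0:ℝ) ≤ (8 - 3 * c ^ 2) * (c ^ 2 * a ^ 2) :=
        mul_nonneg (by nlinarith) (mul_nonneg (sq_nonneg c) (sq_nonneg a))
      nlinarith [sq_nonneg ((8 - c ^ 2) * b - 4 * c * a), h82, h8,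
        mul_pos h8 h8]
    nlinarith [mul_le_mul_of_nonneg_left key hΔ0, h1, sq_nonneg (c * a - b),
      mul_nonneg (by linarith : (0:ℝ) ≤ 1 - Δ) (sq_nonneg (c * a - b))]

lemma spectral_split (A : Matrix n n ℂ) (hA : A.PosSemidef) (Δ : ℝ)
    (hlb : ∀ i, hA.1.eigenvalues i ≠ 0 → Δ ≤ hA.1.eigenvalues i) (v : n → ℂ) :
    ∃ h w : n → ℂ, v = h + w ∧ A.mulVec h = 0 ∧ star h ⬝ᵥ w = 0 ∧
      Δ * nrm w ^ 2 ≤ (star v ⬝ᵥ A.mulVec v).re := by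
  classical
  obtain ⟨V, hVmem, hV⟩ : ∃ V : Matrix n n ℂ, V ∈ Matrix.unitaryGroup n ℂ ∧
      V = (hA.1.eigenvectorUnitary : Matrix n n ℂ) :=
    ⟨_, hA.1.eigenvectorUnitary.2, rfl⟩
  obtain ⟨e, he⟩ : ∃ e : n → ℝ, e = hA.1.eigenvalues := ⟨_, rfl⟩
  have hlb' : ∀ i, e i ≠ 0 → Δ ≤ e i := he ▸ hlb
  obtain ⟨c, hc⟩ : ∃ c, c = (star V).mulVec v := ⟨_, rfl⟩
  obtain ⟨c0, hc0⟩ : ∃ c0 : n → ℂ, c0 = fun i => if e i = 0 then c i else 0 := ⟨_, rfl⟩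
  obtain ⟨c1, hc1⟩ : ∃ c1 : n → ℂ, c1 = fun i => if e i = 0 then 0 else c i := ⟨_, rfl⟩
  have hVV : V * star V = 1 := Matrix.mem_unitaryGroup_iff.mp hVmem
  have hVc : V.mulVec c = v := by rw [hc, mulVec_mulVec, hVV, one_mulVec]
  have hc01 : c0 + c1 = c := by
    funext i
    by_cases hei : e i = 0 <;> simp [hc0, hc1, hei]
  have hAV : A * V = V * Matrix.diagonal (RCLike.ofReal ∘ e) := by
    conv_lhs => rw [hA.1.spectral_theorem]
    rw [Unitary.conjStarAlgAut_apply, ← hV, ← he, mul_assoc, mul_assoc, Matrix.mem_unitaryGroup_iff'.mp hVmem, mul_one]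
  refine ⟨V.mulVec c0, V.mulVec c1, ?_, ?_, ?_, ?_⟩
  · rw [← mulVec_add, hc01, hVc]
  · rw [mulVec_mulVec, hAV, ← mulVec_mulVec]
    have hz : (Matrix.diagonal (RCLike.ofReal ∘ e)).mulVec c0 = 0 := by
      funext i
      rw [mulVec_diagonal]
      by_cases hei : e i = 0 <;> simp [hc0, hei]
    rw [hz, mulVec_zero]
  · rw [unitary_dot hVmem]
    simp only [dotProduct, Pi.star_apply]
    apply Finset.sum_eq_zero
    intro i _
    by_cases hei : e i = 0 <;> simp [hc0, hc1, hei]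
  · have hre : (star v ⬝ᵥ A.mulVec v).re = ∑ i, e i * Complex.normSq (c i) := by
      conv_lhs => rw [← hVc]
      rw [mulVec_mulVec, hAV, ← mulVec_mulVec, unitary_dot hVmem]
      simp only [dotProduct, Pi.star_apply, Complex.re_sum]
      apply Finset.sum_congr rfl
      intro i _
      rw [mulVec_diagonal]
      have h1 : star (c i) * ((RCLike.ofReal ∘ e) i * c i)
          = (e i : ℂ) * (star (c i) * c i) := by
        simp [Function.comp]
        ring
      rw [h1]
      rw [Complex.re_ofReal_mul, star_mul_self_re]
    have hwsq : nrm (V.mulVec c1) ^ 2 = ∑ i, Complex.normSq (c1 i) := by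
      rw [← dot_self_re, unitary_dot hVmem]
      simp only [dotProduct, Pi.star_apply, Complex.re_sum]
      exact Finset.sum_congr rfl (fun i _ => star_mul_self_re _)
    rw [hre, hwsq, Finset.mul_sum]
    apply Finset.sum_le_sum
    intro i _
    by_cases hei : e i = 0
    · simp [hc1, hei]
    · have h1 := hlb' i hei
      have hnn : 0 ≤ Complex.normSq (c i) := Complex.normSq_nonneg _
      simp only [hc1, hei, if_false]
      nlinarith

/-- A dot-product is real if conjugation-symmetric; specialized: `star x ⬝ᵥ x` is real
nonneg as a complex number equal to `nrm x ^ 2`. -/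
lemma star_dot_self_eq (x : n → ℂ) : star x ⬝ᵥ x = ((nrm x ^ 2 : ℝ) : ℂ) := by
  have him : (star x ⬝ᵥ x).im = 0 := by
    simp only [dotProduct, Pi.star_apply, Complex.im_sum]
    apply Finset.sum_eq_zero
    intro i _
    simp [Complex.star_def, Complex.mul_im]
    ring
  have hre := dot_self_re x
  apply Complex.ext
  · simp [← Complex.ofReal_pow, hre]
  · simp [← Complex.ofReal_pow, him]

end Stmt3Aux
-- appended to main.lean for testing
namespace Stmt3Aux
variable {n : Type*} [Fintype n] [DecidableEq n]

lemma nrm_eq_zero_iff (f : n → ℂ) : nrm f = 0 ↔ f = 0 := by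
  unfold nrm
  rw [norm_eq_zero]
  constructor
  · intro h
    exact (WithLp.equiv 2 (n → ℂ)).symm.injective h
  · rintro rfl
    rfl

lemma smul_quad (M : Matrix n n ℂ) (a : ℂ) (x : n → ℂ) :
    star (a • x) ⬝ᵥ M.mulVec (a • x) = (Complex.normSq a : ℂ) * (star x ⬝ᵥ M.mulVec x) := by
  rw [star_smul, mulVec_smul, smul_dotProduct, dotProduct_smul, smul_eq_mul, smul_eq_mul,
    ← mul_assoc, Complex.normSq_eq_conj_mul_self]
  rfl

lemma sqrt_le_of_sq_le {t ε : ℝ} (ht : 0 ≤ t) (h : t ^ 2 ≤ ε) : t ≤ Real.sqrt ε := by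
  calc t = Real.sqrt (t ^ 2) := (Real.sqrt_sq ht).symm
    _ ≤ Real.sqrt ε := Real.sqrt_le_sqrt h

lemma overlap_bound {d T : ℕ} (U : ℕ → Matrix (Fin d) (Fin d) ℂ)
    (hU : ∀ i, 1 ≤ i → i ≤ T → U i ∈ Matrix.unitaryGroup (Fin d) ℂ)
    (Pin Pout : Matrix (Fin d) (Fin d) ℂ) (ε : ℝ) (hε0 : 0 ≤ ε)
    (hacc : ∀ ξ η : Fin d → ℂ, Pin.mulVec ξ = 0 → Pout.mulVec η = 0 →
      star ξ ⬝ᵥ ξ = 1 → star η ⬝ᵥ η = 1 →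
      ‖star η ⬝ᵥ (prodU d U T).mulVec ξ‖ ^ 2 ≤ ε) :
    ∀ x y : Fin d → ℂ, Pin.mulVec x = 0 →
      ((prodU d U T)ᴴ * Pout * prodU d U T).mulVec y = 0 →
      ‖star x ⬝ᵥ y‖ ≤ Real.sqrt ε * (nrm x * nrm y) := by
  intro x y hx hy
  have hWmem : prodU d U T ∈ Matrix.unitaryGroup (Fin d) ℂ := prodU_unitary U hU T le_rfl
  set W : Matrix (Fin d) (Fin d) ℂ := prodU d U T with hW
  have hRHS0 : 0 ≤ Real.sqrt ε * (nrm x * nrm y) := by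
    have := nrm_nonneg x; have := nrm_nonneg y; positivity
  by_cases hx0 : x = 0
  · simp only [hx0, star_zero, zero_dotProduct, norm_zero]
    have := nrm_nonneg (0 : Fin d → ℂ); have := nrm_nonneg y
    positivity
  by_cases hy0 : y = 0
  · simp only [hy0, dotProduct_zero, norm_zero]
    have := nrm_nonneg (0 : Fin d → ℂ); have := nrm_nonneg x
    positivity
  have hPoutWy : Pout.mulVec (W.mulVec y) = 0 := by
    have h1 : Wᴴ.mulVec (Pout.mulVec (W.mulVec y)) = 0 := by
      rw [mulVec_mulVec, mulVec_mulVec]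
      exact hy
    have h2 := congrArg W.mulVec h1
    rwa [mulVec_mulVec, ← Matrix.star_eq_conjTranspose,
      Matrix.mem_unitaryGroup_iff.mp hWmem, one_mulVec, mulVec_zero] at h2
  set nx := nrm x with hnx
  set ny := nrm y with hny
  have hnx0 : 0 < nx := lt_of_le_of_ne (nrm_nonneg x) (fun h => hx0 ((nrm_eq_zero_iff x).mp h.symm))
  have hny0 : 0 < ny := lt_of_le_of_ne (nrm_nonneg y) (fun h => hy0 ((nrm_eq_zero_iff y).mp h.symm))
  set ξ' : Fin d → ℂ := ((nx⁻¹ : ℝ) : ℂ) • x with hξ'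
  set η' : Fin d → ℂ := ((ny⁻¹ : ℝ) : ℂ) • (W.mulVec y) with hη'
  have hdotx : star x ⬝ᵥ x = ((nx ^ 2 : ℝ) : ℂ) := star_dot_self_eq x
  have hdotWy : star (W.mulVec y) ⬝ᵥ (W.mulVec y) = ((ny ^ 2 : ℝ) : ℂ) := by
    rw [unitary_dot hWmem]
    exact star_dot_self_eq y
  have hunitξ : star ξ' ⬝ᵥ ξ' = 1 := by
    rw [hξ', star_smul, smul_dotProduct, dotProduct_smul, hdotx]
    simp only [smul_eq_mul, RCLike.star_def, Complex.conj_ofReal]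
    rw [← Complex.ofReal_mul, ← Complex.ofReal_mul]
    norm_cast
    field_simp
  have hunitη : star η' ⬝ᵥ η' = 1 := by
    rw [hη', star_smul, smul_dotProduct, dotProduct_smul, hdotWy]
    simp only [smul_eq_mul, RCLike.star_def, Complex.conj_ofReal]
    rw [← Complex.ofReal_mul, ← Complex.ofReal_mul]
    norm_cast
    field_simp
  have hPinξ' : Pin.mulVec ξ' = 0 := by rw [hξ', mulVec_smul, hx, smul_zero]
  have hPoutη' : Pout.mulVec η' = 0 := by rw [hη', mulVec_smul, hPoutWy, smul_zero]
  have key := hacc ξ' η' hPinξ' hPoutη' hunitξ hunitη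
  have hval : star η' ⬝ᵥ W.mulVec ξ'
      = ((ny⁻¹ * nx⁻¹ : ℝ) : ℂ) * (star y ⬝ᵥ x) := by
    rw [hη', hξ', mulVec_smul, star_smul, smul_dotProduct, dotProduct_smul,
      unitary_dot hWmem]
    simp only [smul_eq_mul, RCLike.star_def, Complex.conj_ofReal]
    push_cast
    ring
  have habs : ‖star η' ⬝ᵥ W.mulVec ξ'‖
      = ny⁻¹ * nx⁻¹ * ‖star x ⬝ᵥ y‖ := by
    rw [hval, norm_mul, Complex.norm_real, Real.norm_eq_abs]
    have h1 : ‖star y ⬝ᵥ x‖ = ‖star x ⬝ᵥ y‖ := by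
      rw [Matrix.star_dotProduct]
      simp [RCLike.star_def]
    rw [h1, abs_of_nonneg (by positivity)]
  have hle : ny⁻¹ * nx⁻¹ * ‖star x ⬝ᵥ y‖ ≤ Real.sqrt ε := by
    apply sqrt_le_of_sq_le (by positivity)
    rw [← habs]
    exact key
  have := mul_le_mul_of_nonneg_left hle (by positivity : (0:ℝ) ≤ nx * ny)
  calc ‖star x ⬝ᵥ y‖
      = (nx * ny) * (ny⁻¹ * nx⁻¹ * ‖star x ⬝ᵥ y‖) := by
        field_simp
    _ ≤ (nx * ny) * Real.sqrt ε := this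
    _ = Real.sqrt ε * (nx * ny) := by ring

end Stmt3Aux
open Stmt3Aux in
theorem stmt3 (T d : ℕ) (hT : 1 ≤ T) (hd : 1 ≤ d)
    (U : ℕ → Matrix (Fin d) (Fin d) ℂ)
    (hU : ∀ i, 1 ≤ i → i ≤ T → U i ∈ Matrix.unitaryGroup (Fin d) ℂ)
    (Pin Pout : Matrix (Fin d) (Fin d) ℂ)
    (hPin : Pin.IsHermitian) (hPin2 : Pin * Pin = Pin)
    (hPout : Pout.IsHermitian) (hPout2 : Pout * Pout = Pout)
    (ε : ℝ) (hε0 : 0 ≤ ε) (hε1 : ε < 1)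
    (hacc : ∀ ξ η : Fin d → ℂ, Pin.mulVec ξ = 0 → Pout.mulVec η = 0 →
      star ξ ⬝ᵥ ξ = 1 → star η ⬝ᵥ η = 1 →
      ‖star η ⬝ᵥ (prodU d U T).mulVec ξ‖ ^ 2 ≤ ε)
    (ψ : Fin (T + 1) → ℂ) (hψ : star ψ ⬝ᵥ ψ = 1)
    (Hp : Matrix (Fin (T + 1) × Fin d) (Fin (T + 1) × Fin d) ℂ)
    (hHp : Hp.PosSemidef)
    (hker : ∀ v : Fin (T + 1) × Fin d → ℂ,
      Hp.mulVec v = 0 ↔ ∃ ξ : Fin d → ℂ, v = historyState T d U ψ ξ)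
    (Δ : ℝ)
    (hΔ : IsLeast {r : ℝ | (∃ i, hHp.1.eigenvalues i = r) ∧ r ≠ 0} Δ)
    (hΔ1 : Δ ≤ 1) :
    ∀ v : Fin (T + 1) × Fin d → ℂ,
      Δ / 4 * (1 - Real.sqrt ε)
          * min (‖ψ 0‖ ^ 2) (‖ψ (Fin.last T)‖ ^ 2)
          * (star v ⬝ᵥ v).re
        ≤ (star v ⬝ᵥ
            (Hp + Matrix.single (0 : Fin (T + 1)) (0 : Fin (T + 1)) (1 : ℂ) ⊗ₖ Pin
              + Matrix.single (Fin.last T) (Fin.last T) (1 : ℂ) ⊗ₖ Pout).mulVec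
              v).re := by
  intro v
  classical
  -- basic quantities
  have hWmem : prodU d U T ∈ Matrix.unitaryGroup (Fin d) ℂ := prodU_unitary U hU T le_rfl
  have hsqε0 : 0 ≤ Real.sqrt ε := Real.sqrt_nonneg ε
  have hsqε1 : Real.sqrt ε ≤ 1 := by
    rw [show (1:ℝ) = Real.sqrt 1 by simp]
    exact Real.sqrt_le_sqrt (le_of_lt hε1)
  set m : ℝ := min (‖ψ 0‖ ^ 2) (‖ψ (Fin.last T)‖ ^ 2) with hm
  have hm0 : 0 ≤ m := le_min (sq_nonneg _) (sq_nonneg _)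
  have hψsum : ∑ t : Fin (T + 1), Complex.normSq (ψ t) = 1 := by
    have h1 := congrArg Complex.re hψ
    rw [dot_self_re, nrm_sq_eq_sum] at h1
    simpa using h1
  have hm1 : m ≤ 1 := by
    have h1 : Complex.normSq (ψ 0) ≤ 1 := by
      rw [← hψsum]
      exact Finset.single_le_sum (f := fun t => Complex.normSq (ψ t))
        (fun t _ => Complex.normSq_nonneg _) (Finset.mem_univ 0)
    calc m ≤ ‖ψ 0‖ ^ 2 := min_le_left _ _
      _ = Complex.normSq (ψ 0) := Complex.sq_norm _
      _ ≤ 1 := h1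
  have hΔ0 : 0 ≤ Δ := by
    obtain ⟨⟨i, hi⟩, _⟩ := hΔ.1
    exact hi ▸ hHp.eigenvalues_nonneg i
  have hlb : ∀ i, hHp.1.eigenvalues i ≠ 0 → Δ ≤ hHp.1.eigenvalues i :=
    fun i hi => hΔ.2 ⟨⟨i, rfl⟩, hi⟩
  -- the penalty projector
  set B1 : Matrix (Fin (T + 1) × Fin d) (Fin (T + 1) × Fin d) ℂ :=
    Matrix.single (0 : Fin (T + 1)) (0 : Fin (T + 1)) (1 : ℂ) ⊗ₖ Pin with hB1
  set B2 : Matrix (Fin (T + 1) × Fin d) (Fin (T + 1) × Fin d) ℂ :=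
    Matrix.single (Fin.last T) (Fin.last T) (1 : ℂ) ⊗ₖ Pout with hB2
  have h0T : (0 : Fin (T + 1)) ≠ Fin.last T := by
    intro hcontra
    have := congrArg Fin.val hcontra
    simp [Fin.val_last] at this
    omega
  have hQherm : (B1 + B2).IsHermitian := (kron_herm _ hPin).add (kron_herm _ hPout)
  have hQ2 : (B1 + B2) * (B1 + B2) = B1 + B2 := by
    rw [add_mul, mul_add, mul_add, hB1, hB2, kron_mul_same, kron_mul_same,
      kron_mul_ne _ _ h0T, kron_mul_ne _ _ (Ne.symm h0T), hPin2, hPout2]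
    simp
  -- spectral decomposition
  obtain ⟨h, w, hv, hAh, horth, hbound⟩ := spectral_split Hp hHp Δ hlb v
  obtain ⟨ξ, hξ⟩ := (hker h).mp hAh
  set a : ℝ := nrm h with ha
  set b : ℝ := nrm w with hb
  have ha0 : 0 ≤ a := nrm_nonneg h
  have hb0 : 0 ≤ b := nrm_nonneg w
  -- pythagoras
  have hpyth : (star v ⬝ᵥ v).re = a ^ 2 + b ^ 2 := by
    have hwh : star w ⬝ᵥ h = 0 := by
      rw [Matrix.star_dotProduct, horth, star_zero]
    have : star v ⬝ᵥ v = star h ⬝ᵥ h + star w ⬝ᵥ w := by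
      rw [hv, star_add, add_dotProduct, dotProduct_add, dotProduct_add, horth, hwh]
      ring
    rw [this, Complex.add_re, dot_self_re, dot_self_re]
  -- history state norm
  have hnh : a = nrm ξ := by
    have hsq : a ^ 2 = nrm ξ ^ 2 := by
      rw [ha, nrm_sq_eq_sum, hξ]
      rw [Fintype.sum_prod_type]
      have hrow : ∀ t : Fin (T + 1),
          (∑ k : Fin d, Complex.normSq (historyState T d U ψ ξ (t, k)))
            = Complex.normSq (ψ t) * nrm ξ ^ 2 := by
        intro t
        have hWt : prodU d U t.val ∈ Matrix.unitaryGroup (Fin d) ℂ :=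
          prodU_unitary U hU t.val (Nat.lt_succ_iff.mp t.isLt)
        have : nrm ((prodU d U t.val).mulVec ξ) = nrm ξ := unitary_nrm hWt ξ
        rw [← this, nrm_sq_eq_sum, Finset.mul_sum]
        apply Finset.sum_congr rfl
        intro k _
        rw [historyState]
        exact Complex.normSq_mul _ _
      rw [Finset.sum_congr rfl (fun t _ => hrow t), ← Finset.sum_mul, hψsum, one_mul]
    calc a = Real.sqrt (a ^ 2) := (Real.sqrt_sq ha0).symm
      _ = Real.sqrt (nrm ξ ^ 2) := by rw [hsq]
      _ = nrm ξ := Real.sqrt_sq (nrm_nonneg ξ)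
  -- quadratic form of the projector on the history state
  set W : Matrix (Fin d) (Fin d) ℂ := prodU d U T with hW
  set Qc : Matrix (Fin d) (Fin d) ℂ := Wᴴ * Pout * W with hQc
  have hQcherm : Qc.IsHermitian := by
    rw [hQc, Matrix.IsHermitian, conjTranspose_mul, conjTranspose_mul,
      conjTranspose_conjTranspose, hPout.eq, mul_assoc]
  have hWWH : W * Wᴴ = 1 := by
    rw [← Matrix.star_eq_conjTranspose]
    exact Matrix.mem_unitaryGroup_iff.mp hWmem
  have hQc2 : Qc * Qc = Qc := by
    rw [hQc]
    calc Wᴴ * Pout * W * (Wᴴ * Pout * W) = Wᴴ * Pout * (W * Wᴴ) * Pout * W := by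
          noncomm_ring
      _ = Wᴴ * Pout * W := by rw [hWWH, mul_one, mul_assoc Wᴴ Pout Pout, hPout2]
  -- components of the history state
  have hh0 : (fun k => h ((0 : Fin (T + 1)), k)) = ψ 0 • ξ := by
    funext k
    rw [hξ, historyState]
    simp [prodU_zero, Matrix.one_mulVec]
  have hhT : (fun k => h (Fin.last T, k)) = ψ (Fin.last T) • (W.mulVec ξ) := by
    funext k
    rw [hξ, historyState]
    simp [Fin.val_last, ← hW]
  have hQh_eq : (star h ⬝ᵥ (B1 + B2).mulVec h).re
      = Complex.normSq (ψ 0) * (star ξ ⬝ᵥ Pin.mulVec ξ).re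
        + Complex.normSq (ψ (Fin.last T)) * (star ξ ⬝ᵥ Qc.mulVec ξ).re := by
    rw [add_mulVec, dotProduct_add, Complex.add_re]
    congr 1
    · rw [hB1, kron_quad, hh0, smul_quad, Complex.re_ofReal_mul]
    · rw [hB2, kron_quad, hhT, smul_quad]
      have hQQ : star (W.mulVec ξ) ⬝ᵥ Pout.mulVec (W.mulVec ξ) = star ξ ⬝ᵥ Qc.mulVec ξ := by
        rw [star_mulVec_dot, mulVec_mulVec, mulVec_mulVec, hQc]
      rw [hQQ, Complex.re_ofReal_mul]
  have hover' : ∀ x y : Fin d → ℂ, Pin.mulVec x = 0 → Qc.mulVec y = 0 →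
      ‖star x ⬝ᵥ y‖ ≤ Real.sqrt ε * (nrm x * nrm y) := by
    intro x y hx hy
    exact overlap_bound U hU Pin Pout ε hε0 hacc x y hx hy
  have h2p := two_proj hPin hPin2 hQcherm hQc2 (Real.sqrt ε) hsqε0 hover' ξ
  have hPinpos : 0 ≤ (star ξ ⬝ᵥ Pin.mulVec ξ).re := by
    rw [proj_quad_re hPin hPin2]
    positivity
  have hQcpos : 0 ≤ (star ξ ⬝ᵥ Qc.mulVec ξ).re := by
    rw [proj_quad_re hQcherm hQc2]
    positivity
  have hψ0m : m ≤ Complex.normSq (ψ 0) := by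
    rw [← Complex.sq_norm]; exact min_le_left _ _
  have hψTm : m ≤ Complex.normSq (ψ (Fin.last T)) := by
    rw [← Complex.sq_norm]; exact min_le_right _ _
  have hQh_ge : (1 - Real.sqrt ε) * m * a ^ 2 ≤ (star h ⬝ᵥ (B1 + B2).mulVec h).re := by
    rw [hQh_eq, hnh]
    nlinarith [mul_le_mul_of_nonneg_left h2p hm0,
      mul_nonneg (sub_nonneg.mpr hψ0m) hPinpos,
      mul_nonneg (sub_nonneg.mpr hψTm) hQcpos]
  set c : ℝ := Real.sqrt ((1 - Real.sqrt ε) * m) with hc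
  have hc0 : 0 ≤ c := Real.sqrt_nonneg _
  have hcsq : c ^ 2 = (1 - Real.sqrt ε) * m :=
    Real.sq_sqrt (mul_nonneg (by linarith) hm0)
  have hc1 : c ≤ 1 := by
    rw [hc]
    apply Real.sqrt_le_one.mpr
    calc (1 - Real.sqrt ε) * m ≤ 1 * 1 :=
      mul_le_mul (by linarith) hm1 hm0 (by norm_num)
      _ = 1 := by norm_num
  set q : ℝ := nrm ((B1 + B2).mulVec v) with hq
  have hq0 : 0 ≤ q := nrm_nonneg _
  have hca : c * a ≤ nrm ((B1 + B2).mulVec h) := by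
    have hsq : (c * a) ^ 2 ≤ nrm ((B1 + B2).mulVec h) ^ 2 := by
      rw [← proj_quad_re hQherm hQ2]
      calc (c * a) ^ 2 = c ^ 2 * a ^ 2 := by ring
        _ = (1 - Real.sqrt ε) * m * a ^ 2 := by rw [hcsq]
        _ ≤ _ := hQh_ge
    calc c * a = Real.sqrt ((c * a) ^ 2) := (Real.sqrt_sq (mul_nonneg hc0 ha0)).symm
      _ ≤ Real.sqrt (nrm ((B1 + B2).mulVec h) ^ 2) := Real.sqrt_le_sqrt hsq
      _ = nrm ((B1 + B2).mulVec h) := Real.sqrt_sq (nrm_nonneg _)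
  have hqtri : nrm ((B1 + B2).mulVec h) ≤ q + b := by
    have hsplit : (B1 + B2).mulVec h = (B1 + B2).mulVec v + (-((B1 + B2).mulVec w)) := by
      rw [hv, mulVec_add]
      abel
    rw [hsplit]
    calc nrm ((B1 + B2).mulVec v + (-((B1 + B2).mulVec w)))
        ≤ q + nrm (-((B1 + B2).mulVec w)) := nrm_add_le _ _
      _ = q + nrm ((B1 + B2).mulVec w) := by rw [nrm_neg]
      _ ≤ q + b := by
          have := proj_contract hQherm hQ2 w
          linarith
  have hq2 : c * a - b ≤ q := by linarith
  have hsplitRHS : (star v ⬝ᵥ (Hp + B1 + B2).mulVec v).re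
      = (star v ⬝ᵥ Hp.mulVec v).re + (star v ⬝ᵥ (B1 + B2).mulVec v).re := by
    rw [add_assoc, add_mulVec, dotProduct_add, Complex.add_re]
  have hQv : (star v ⬝ᵥ (B1 + B2).mulVec v).re = q ^ 2 := proj_quad_re hQherm hQ2 v
  rw [hsplitRHS, hQv, hpyth]
  have hscalar := scalar_ineq Δ c a b q hΔ0 hΔ1 hc0 hc1 ha0 hb0 hq0 hq2
  calc Δ / 4 * (1 - Real.sqrt ε) * m * (a ^ 2 + b ^ 2)
      = Δ / 4 * c ^ 2 * (a ^ 2 + b ^ 2) := by rw [hcsq]; ring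
    _ ≤ Δ * b ^ 2 + q ^ 2 := hscalar
    _ ≤ (star v ⬝ᵥ Hp.mulVec v).re + q ^ 2 := by linarith [hbound]
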